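/- Gauge freedom for the Gervais–Neveu–Felder equation: let γ ∈ ℂ and let R(λ,μ,x) be an End(ℂ^N⊗ℂ^N)-valued function on Λ×Λ×ℂ^N satisfying (a) [h⊗Id + Id⊗h, R(λ,μ,x)] = 0 for every diagonal N×N matrix h, and (b) the two-parameter Gervais–Neveu–Felder equation R_{12}(λ_1,λ_2, x+γh^{(3)}) R_{13}(λ_1,λ_3, x−γh^{(2)}) R_{23}(λ_2,λ_3, x+γh^{(1)}) = R_{23}(λ_2,λ_3, x−γh^{(1)}) R_{13}(λ_1,λ_3, x+γh^{(2)}) R_{12}(λ_1,λ_2, x−γh^{(3)}) for all λ_1,λ_2,λ_3 ∈ Λ and x ∈ ℂ^N. Then for every function α: Λ→ℂ and every β ∈ ℂ, the matrix R̃(λ,μ,x) := (e^{[α(λ)+β]X(x)}⊗e^{[α(μ)−β]X(x)}) · e^{γ[α(λ)−α(μ)−β]C} · R(λ,μ,x) · e^{γ[α(λ)−α(μ)+β]C} · (e^{−[α(λ)−β]X(x)}⊗e^{−[α(μ)+β]X(x)}) also satisfies the two-parameter Gervais–Neveu–Felder equation, where X(x) := diag(x_1,…,x_N) − ((x_1+…+x_N)/N)·Id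 and C := Σ_{i=1}^N e_{ii}⊗e_{ii} − (1/N) Id⊗Id. -/

import Mathlib

/- STATEMENT 8: Gauge freedom for the Gervais–Neveu–Felder equation:
   if R satisfies the Cartan invariance and the two-parameter GNF equation,
   then so does
   R̃(λ,μ,x) = (e^{[α(λ)+β]X}⊗e^{[α(μ)−β]X}) e^{γ[α(λ)−α(μ)−β]C} R(λ,μ,x)
               e^{γ[α(λ)−α(μ)+β]C} (e^{−[α(λ)−β]X}⊗e^{−[α(μ)+β]X}). -/

noncomputable section
open Matrix Complex
open scoped Kronecker BigOperators

variable (N : ℕ)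

def E (i j : Fin N) : Matrix (Fin N) (Fin N) ℂ := Matrix.single i j 1

/-- the vector-representation weight w_k = δ_k − (1/N)(1,…,1) ∈ ℂ^N -/
def wt (k : Fin N) : Fin N → ℂ :=
  (Pi.single k 1 : Fin N → ℂ) - fun _ => ((N : ℂ))⁻¹

/-- S placed in factors 1,2 of (ℂ^N)^{⊗3}, argument shifted by s·h^{(3)}
    (acting as S(x + s·w_k) on index k in factor 3) -/
def sh12 (S : (Fin N → ℂ) → Matrix (Fin N × Fin N) (Fin N × Fin N) ℂ)
    (x : Fin N → ℂ) (s : ℂ) :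
    Matrix (Fin N × Fin N × Fin N) (Fin N × Fin N × Fin N) ℂ :=
  fun p q => if p.2.2 = q.2.2 then S (x + s • wt N q.2.2) (p.1, p.2.1) (q.1, q.2.1) else 0

def sh13 (S : (Fin N → ℂ) → Matrix (Fin N × Fin N) (Fin N × Fin N) ℂ)
    (x : Fin N → ℂ) (s : ℂ) :
    Matrix (Fin N × Fin N × Fin N) (Fin N × Fin N × Fin N) ℂ :=
  fun p q => if p.2.1 = q.2.1 then S (x + s • wt N q.2.1) (p.1, p.2.2) (q.1, q.2.2) else 0

def sh23 (S : (Fin N → ℂ) → Matrix (Fin N × Fin N) (Fin N × Fin N) ℂ)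
    (x : Fin N → ℂ) (s : ℂ) :
    Matrix (Fin N × Fin N × Fin N) (Fin N × Fin N × Fin N) ℂ :=
  fun p q => if p.1 = q.1 then S (x + s • wt N q.1) (p.2.1, p.2.2) (q.2.1, q.2.2) else 0

/-- the two-parameter Gervais–Neveu–Felder equation for R at (λ₁,λ₂,λ₃,x),
    with dynamical shift parameter γ -/
def GNF (γ : ℂ) (R : ℂ → ℂ → (Fin N → ℂ) → Matrix (Fin N × Fin N) (Fin N × Fin N) ℂ)
    (lam₁ lam₂ lam₃ : ℂ) (x : Fin N → ℂ) : Prop :=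
  sh12 N (R lam₁ lam₂) x γ * sh13 N (R lam₁ lam₃) x (-γ) * sh23 N (R lam₂ lam₃) x γ =
  sh23 N (R lam₂ lam₃) x (-γ) * sh13 N (R lam₁ lam₃) x γ * sh12 N (R lam₁ lam₂) x (-γ)

/-- X(x) = diag(x₁,…,x_N) − ((x₁+…+x_N)/N)·Id -/
def Xmat (x : Fin N → ℂ) : Matrix (Fin N) (Fin N) ℂ :=
  Matrix.diagonal x - ((∑ i : Fin N, x i) / (N : ℂ)) • (1 : Matrix (Fin N) (Fin N) ℂ)

/-- C = Σ_i e_{ii}⊗e_{ii} − (1/N) Id⊗Id -/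
def Cmat : Matrix (Fin N × Fin N) (Fin N × Fin N) ℂ :=
  (∑ i : Fin N, E N i i ⊗ₖ E N i i) -
    ((N : ℂ))⁻¹ • (1 : Matrix (Fin N × Fin N) (Fin N × Fin N) ℂ)

/-- the gauge-transformed R-matrix R̃ -/
def RGauge (γ : ℂ) (α : ℂ → ℂ) (β : ℂ)
    (R : ℂ → ℂ → (Fin N → ℂ) → Matrix (Fin N × Fin N) (Fin N × Fin N) ℂ)
    (lam mu : ℂ) (x : Fin N → ℂ) : Matrix (Fin N × Fin N) (Fin N × Fin N) ℂ :=
  (NormedSpace.exp ((α lam + β) • Xmat N x) ⊗ₖ NormedSpace.exp ((α mu - β) • Xmat N x)) *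
  NormedSpace.exp ((γ * (α lam - α mu - β)) • Cmat N) *
  R lam mu x *
  NormedSpace.exp ((γ * (α lam - α mu + β)) • Cmat N) *
  (NormedSpace.exp (-(α lam - β) • Xmat N x) ⊗ₖ NormedSpace.exp (-(α mu + β) • Xmat N x))

-- ===== auxiliary development =====
def del (i j : Fin N) : ℂ := if i = j then 1 else 0

def eF (i j : Fin N) : ℂ := del N i j - (N : ℂ)⁻¹

def chiF (x : Fin N → ℂ) (i : Fin N) : ℂ := x i - (∑ j, x j) / N

lemma del_self (i : Fin N) : del N i i = 1 := if_pos rfl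

lemma del_comm (i j : Fin N) : del N i j = del N j i := by
  unfold del; by_cases h : i = j <;> simp [h, eq_comm]

lemma eF_self (i : Fin N) : eF N i i = 1 - (N : ℂ)⁻¹ := by rw [eF, del_self]

lemma eF_comm (i j : Fin N) : eF N i j = eF N j i := by rw [eF, eF, del_comm]

lemma Ncast_ne (hN : 2 ≤ N) : (N : ℂ) ≠ 0 := by
  have : (0:ℕ) < N := by omega
  exact_mod_cast Nat.cast_ne_zero.mpr (by omega)

lemma chiF_shift (hN : 2 ≤ N) (x : Fin N → ℂ) (s : ℂ) (k i : Fin N) :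
    chiF N (x + s • wt N k) i = chiF N x i + s * eF N i k := by
  have hsum : (∑ j, wt N k j) = 0 := by
    simp [wt, Finset.sum_sub_distrib, Finset.sum_ite_eq, Pi.single_apply]
    rw [mul_inv_cancel₀ (Ncast_ne N hN)]; ring
  simp only [chiF, Pi.add_apply, Pi.smul_apply, smul_eq_mul]
  rw [Finset.sum_add_distrib, ← Finset.mul_sum, hsum]
  simp only [wt, eF, del, Pi.sub_apply, Pi.single_apply, mul_zero, add_zero]
  ring
lemma sum_single_mul (a b : Fin N) :
    (∑ i, (Pi.single i 1 : Fin N → ℂ) a * (Pi.single i 1 : Fin N → ℂ) b) = del N a b := by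
  simp only [Pi.single_apply]
  rcases eq_or_ne a b with h | h
  · subst h; simp [del_self, Finset.sum_ite_eq, eq_comm]
  · rw [Finset.sum_eq_zero, del, if_neg h]
    intro i _
    by_cases h1 : a = i <;> by_cases h2 : b = i <;> simp [h1, h2]
    exact absurd (h1.trans h2.symm) h

lemma Xmat_diag (x : Fin N → ℂ) : Xmat N x = Matrix.diagonal (chiF N x) := by
  ext i j
  by_cases h : i = j
  · subst h
    simp only [Xmat, Matrix.sub_apply, Matrix.smul_apply, Matrix.one_apply_eq,
      Matrix.diagonal_apply_eq, chiF, smul_eq_mul]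
    ring
  · simp [Xmat, Matrix.sub_apply, Matrix.smul_apply, Matrix.one_apply_ne h,
      Matrix.diagonal_apply_ne _ h]

lemma exp_smul_diag {n : Type*} [Fintype n] [DecidableEq n] (c : ℂ) (v : n → ℂ) :
    NormedSpace.exp (c • Matrix.diagonal v) =
      Matrix.diagonal (fun i => Complex.exp (c * v i)) := by
  rw [← Matrix.diagonal_smul, Matrix.exp_diagonal]
  funext i
  rw [Pi.exp_def, Complex.exp_eq_exp_ℂ]
  simp

lemma Cmat_diag : Cmat N = Matrix.diagonal (fun p : Fin N × Fin N => eF N p.1 p.2) := by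
  have h1 : ∀ i : Fin N, E N i i = Matrix.diagonal (Pi.single i 1) := by
    intro i; ext a b
    by_cases h : a = b
    · subst h
      simp [E, Matrix.single, Pi.single_apply, eq_comm]
    · simp only [E, Matrix.single, Matrix.of_apply, Matrix.diagonal_apply_ne _ h]
      rw [if_neg]
      rintro ⟨h1, h2⟩; exact h (h1.symm.trans h2)
  simp only [Cmat, h1, Matrix.diagonal_kronecker_diagonal]
  ext p q
  by_cases h : p = q
  · subst h
    simp only [Matrix.sub_apply, Matrix.sum_apply, Matrix.diagonal_apply_eq,
      Matrix.smul_apply, Matrix.one_apply_eq, smul_eq_mul, mul_one]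
    rw [sum_single_mul N p.1 p.2]; rfl
  · simp [Matrix.sub_apply, Matrix.sum_apply, Matrix.diagonal_apply_ne _ h,
      Matrix.one_apply_ne h]
lemma RGauge_apply (γ : ℂ) (α : ℂ → ℂ) (β : ℂ)
    (R : ℂ → ℂ → (Fin N → ℂ) → Matrix (Fin N × Fin N) (Fin N × Fin N) ℂ)
    (lam mu : ℂ) (x : Fin N → ℂ) (a b c d : Fin N) :
    RGauge N γ α β R lam mu x (a, b) (c, d) =
      Complex.exp ((α lam + β) * chiF N x a + (α mu - β) * chiF N x b +
          γ * (α lam - α mu - β) * eF N a b) *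
        R lam mu x (a, b) (c, d) *
      Complex.exp (γ * (α lam - α mu + β) * eF N c d -
          (α lam - β) * chiF N x c - (α mu + β) * chiF N x d) := by
  rw [RGauge]
  simp only [Xmat_diag, Cmat_diag, exp_smul_diag, Matrix.diagonal_kronecker_diagonal,
    Matrix.mul_assoc, Matrix.diagonal_mul_diagonal]
  rw [Matrix.diagonal_mul, Matrix.mul_diagonal]
  simp only [← Complex.exp_add]
  ring_nf
lemma conserve
    (Λ : Set ℂ) (R : ℂ → ℂ → (Fin N → ℂ) → Matrix (Fin N × Fin N) (Fin N × Fin N) ℂ)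
    (ha : ∀ lam ∈ Λ, ∀ mu ∈ Λ, ∀ x : Fin N → ℂ, ∀ d : Fin N → ℂ,
      (Matrix.diagonal d ⊗ₖ (1 : Matrix (Fin N) (Fin N) ℂ) +
        (1 : Matrix (Fin N) (Fin N) ℂ) ⊗ₖ Matrix.diagonal d) * R lam mu x =
      R lam mu x * (Matrix.diagonal d ⊗ₖ (1 : Matrix (Fin N) (Fin N) ℂ) +
        (1 : Matrix (Fin N) (Fin N) ℂ) ⊗ₖ Matrix.diagonal d))
    {lam mu : ℂ} (hl : lam ∈ Λ) (hm : mu ∈ Λ) (x : Fin N → ℂ)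
    (p q : Fin N × Fin N) (hne : R lam mu x p q ≠ 0) :
    (q.1 = p.1 ∧ q.2 = p.2) ∨ (q.1 = p.2 ∧ q.2 = p.1) := by
  have key : ∀ k : Fin N,
      ((if p.1 = k then (1:ℂ) else 0) + (if p.2 = k then 1 else 0)) =
      ((if q.1 = k then (1:ℂ) else 0) + (if q.2 = k then 1 else 0)) := by
    intro k
    have h := ha lam hl mu hm x (fun i => if i = k then 1 else 0)
    have h2 := congrFun (congrFun h p) q
    simp only [← Matrix.diagonal_one, Matrix.diagonal_kronecker_diagonal,
      Matrix.add_mul, Matrix.mul_add, Matrix.add_apply, Matrix.diagonal_mul,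
      Matrix.mul_diagonal, mul_one, one_mul] at h2
    have h3 : ((if p.1 = k then (1:ℂ) else 0) + (if p.2 = k then 1 else 0)) * R lam mu x p q
        = R lam mu x p q * ((if q.1 = k then (1:ℂ) else 0) + (if q.2 = k then 1 else 0)) := by
      rw [add_mul, mul_add]; exact h2
    rw [mul_comm (R lam mu x p q)] at h3
    exact mul_right_cancel₀ hne h3
  by_cases h11 : q.1 = p.1
  · by_cases h22 : q.2 = p.2
    · exact Or.inl ⟨h11, h22⟩
    · exfalso
      have hk := key p.2
      rw [h11] at hk
      by_cases hpp : p.1 = p.2 <;> norm_num [hpp, h22] at hk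
  · have hk1 := key q.1
    have hp1 : ¬ p.1 = q.1 := fun h => h11 h.symm
    by_cases h21 : p.2 = q.1
    · by_cases hq21 : q.2 = q.1
      · exfalso; norm_num [hp1, h21, hq21] at hk1
      · have hk2 := key p.1
        by_cases h22 : q.2 = p.1
        · exact Or.inr ⟨h21.symm, h22⟩
        · exfalso
          by_cases hpp : p.2 = p.1 <;> norm_num [hpp, h11, h22] at hk2
    · exfalso
      by_cases hq21 : q.2 = q.1 <;> norm_num [hp1, h21, hq21] at hk1
lemma scaled_triple {I : Type*} [Fintype I] [DecidableEq I]
    (A1 A2 A3 : Matrix I I ℂ) (F1 F2 F3 F4 : I → ℂ) (Ee : I → I → ℂ)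
    (h : ∀ p r t q, A1 p r ≠ 0 → A2 r t ≠ 0 → A3 t q ≠ 0 →
      F1 p * F2 r * F3 t * F4 q = Ee p q) :
    Matrix.diagonal F1 * A1 * Matrix.diagonal F2 * A2 * Matrix.diagonal F3 * A3 *
      Matrix.diagonal F4 = Matrix.of fun p q => Ee p q * (A1 * A2 * A3) p q := by
  have hA : Matrix.diagonal F1 * A1 * Matrix.diagonal F2 * A2 * Matrix.diagonal F3 * A3 *
      Matrix.diagonal F4 =
      (Matrix.diagonal F1 * A1 * Matrix.diagonal F2) *
        ((A2 * Matrix.diagonal F3) * (A3 * Matrix.diagonal F4)) := by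
    simp only [Matrix.mul_assoc]
  rw [hA]
  ext p q
  rw [Matrix.of_apply]
  rw [Matrix.mul_apply (M := Matrix.diagonal F1 * A1 * Matrix.diagonal F2)
    (N := (A2 * Matrix.diagonal F3) * (A3 * Matrix.diagonal F4))]
  rw [Matrix.mul_assoc A1 A2 A3]
  rw [Matrix.mul_apply (M := A1) (N := A2 * A3)]
  rw [Finset.mul_sum]
  refine Finset.sum_congr rfl fun r _ => ?_
  rw [Matrix.mul_apply (M := A2 * Matrix.diagonal F3) (N := A3 * Matrix.diagonal F4)]
  rw [Matrix.mul_apply (M := A2) (N := A3)]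
  rw [Finset.mul_sum, Finset.mul_sum, Finset.mul_sum]
  refine Finset.sum_congr rfl fun t _ => ?_
  rw [Matrix.mul_diagonal, Matrix.diagonal_mul, Matrix.mul_diagonal, Matrix.mul_diagonal]
  by_cases h1 : A1 p r = 0
  · simp [h1]
  by_cases h2 : A2 r t = 0
  · simp [h2]
  by_cases h3 : A3 t q = 0
  · simp [h3]
  have hh := h p r t q h1 h2 h3
  linear_combination (A1 p r * A2 r t * A3 t q) * hh
lemma sh12_gauge (hN : 2 ≤ N) (γ s : ℂ) (α : ℂ → ℂ) (β : ℂ)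
    (R : ℂ → ℂ → (Fin N → ℂ) → Matrix (Fin N × Fin N) (Fin N × Fin N) ℂ)
    (lam mu : ℂ) (x : Fin N → ℂ) :
    sh12 N (RGauge N γ α β R lam mu) x s =
      Matrix.diagonal (fun p : Fin N × Fin N × Fin N =>
        Complex.exp ((α lam + β) * (chiF N x p.1 + s * eF N p.1 p.2.2) +
          (α mu - β) * (chiF N x p.2.1 + s * eF N p.2.1 p.2.2) +
          γ * (α lam - α mu - β) * eF N p.1 p.2.1)) *
      sh12 N (R lam mu) x s *
      Matrix.diagonal (fun q : Fin N × Fin N × Fin N =>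
        Complex.exp (γ * (α lam - α mu + β) * eF N q.1 q.2.1 -
          (α lam - β) * (chiF N x q.1 + s * eF N q.1 q.2.2) -
          (α mu + β) * (chiF N x q.2.1 + s * eF N q.2.1 q.2.2))) := by
  ext p q
  rw [Matrix.mul_diagonal, Matrix.diagonal_mul]
  by_cases h : p.2.2 = q.2.2
  · show (if p.2.2 = q.2.2 then _ else 0) = _
    rw [if_pos h]
    show RGauge N γ α β R lam mu (x + s • wt N q.2.2) (p.1, p.2.1) (q.1, q.2.1) = _
    rw [RGauge_apply]
    show _ = _ * (if p.2.2 = q.2.2 then R lam mu (x + s • wt N q.2.2) (p.1, p.2.1) (q.1, q.2.1) else 0) * _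
    rw [if_pos h]
    simp only [chiF_shift N hN, h]
  · show (if p.2.2 = q.2.2 then _ else 0) = _ * (if p.2.2 = q.2.2 then _ else 0) * _
    rw [if_neg h, if_neg h, mul_zero, zero_mul]

lemma sh13_gauge (hN : 2 ≤ N) (γ s : ℂ) (α : ℂ → ℂ) (β : ℂ)
    (R : ℂ → ℂ → (Fin N → ℂ) → Matrix (Fin N × Fin N) (Fin N × Fin N) ℂ)
    (lam mu : ℂ) (x : Fin N → ℂ) :
    sh13 N (RGauge N γ α β R lam mu) x s =
      Matrix.diagonal (fun p : Fin N × Fin N × Fin N =>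
        Complex.exp ((α lam + β) * (chiF N x p.1 + s * eF N p.1 p.2.1) +
          (α mu - β) * (chiF N x p.2.2 + s * eF N p.2.2 p.2.1) +
          γ * (α lam - α mu - β) * eF N p.1 p.2.2)) *
      sh13 N (R lam mu) x s *
      Matrix.diagonal (fun q : Fin N × Fin N × Fin N =>
        Complex.exp (γ * (α lam - α mu + β) * eF N q.1 q.2.2 -
          (α lam - β) * (chiF N x q.1 + s * eF N q.1 q.2.1) -
          (α mu + β) * (chiF N x q.2.2 + s * eF N q.2.2 q.2.1))) := by
  ext p q
  rw [Matrix.mul_diagonal, Matrix.diagonal_mul]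
  by_cases h : p.2.1 = q.2.1
  · show (if p.2.1 = q.2.1 then _ else 0) = _
    rw [if_pos h]
    show RGauge N γ α β R lam mu (x + s • wt N q.2.1) (p.1, p.2.2) (q.1, q.2.2) = _
    rw [RGauge_apply]
    show _ = _ * (if p.2.1 = q.2.1 then R lam mu (x + s • wt N q.2.1) (p.1, p.2.2) (q.1, q.2.2) else 0) * _
    rw [if_pos h]
    simp only [chiF_shift N hN, h]
  · show (if p.2.1 = q.2.1 then _ else 0) = _ * (if p.2.1 = q.2.1 then _ else 0) * _
    rw [if_neg h, if_neg h, mul_zero, zero_mul]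

lemma sh23_gauge (hN : 2 ≤ N) (γ s : ℂ) (α : ℂ → ℂ) (β : ℂ)
    (R : ℂ → ℂ → (Fin N → ℂ) → Matrix (Fin N × Fin N) (Fin N × Fin N) ℂ)
    (lam mu : ℂ) (x : Fin N → ℂ) :
    sh23 N (RGauge N γ α β R lam mu) x s =
      Matrix.diagonal (fun p : Fin N × Fin N × Fin N =>
        Complex.exp ((α lam + β) * (chiF N x p.2.1 + s * eF N p.2.1 p.1) +
          (α mu - β) * (chiF N x p.2.2 + s * eF N p.2.2 p.1) +
          γ * (α lam - α mu - β) * eF N p.2.1 p.2.2)) *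
      sh23 N (R lam mu) x s *
      Matrix.diagonal (fun q : Fin N × Fin N × Fin N =>
        Complex.exp (γ * (α lam - α mu + β) * eF N q.2.1 q.2.2 -
          (α lam - β) * (chiF N x q.2.1 + s * eF N q.2.1 q.1) -
          (α mu + β) * (chiF N x q.2.2 + s * eF N q.2.2 q.1))) := by
  ext p q
  rw [Matrix.mul_diagonal, Matrix.diagonal_mul]
  by_cases h : p.1 = q.1
  · show (if p.1 = q.1 then _ else 0) = _
    rw [if_pos h]
    show RGauge N γ α β R lam mu (x + s • wt N q.1) (p.2.1, p.2.2) (q.2.1, q.2.2) = _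
    rw [RGauge_apply]
    show _ = _ * (if p.1 = q.1 then R lam mu (x + s • wt N q.1) (p.2.1, p.2.2) (q.2.1, q.2.2) else 0) * _
    rw [if_pos h]
    simp only [chiF_shift N hN, h]
  · show (if p.1 = q.1 then _ else 0) = _ * (if p.1 = q.1 then _ else 0) * _
    rw [if_neg h, if_neg h, mul_zero, zero_mul]
def Eexp (γ : ℂ) (α : ℂ → ℂ) (β : ℂ) (lam₁ lam₂ lam₃ : ℂ) (x : Fin N → ℂ)
    (p q : Fin N × Fin N × Fin N) : ℂ :=
      (α lam₁) * ((1) * chiF N x p.1 + (-1) * chiF N x q.1 + (2) * γ * eF N p.1 p.2.1 + (2) * γ * eF N p.1 p.2.2 + (-1) * γ * eF N p.1 q.2.1 + (-1) * γ * eF N p.1 q.2.2 + (1) * γ * eF N p.2.1 q.1 + (1) * γ * eF N p.2.2 q.1) +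
      (α lam₂) * ((1) * chiF N x p.2.1 + (-1) * chiF N x q.2.1 + (-2) * γ * eF N p.1 p.2.1 + (-1) * γ * eF N p.1 p.2.2 + (1) * γ * eF N p.1 q.1 + (2) * γ * eF N p.1 q.2.1 + (3) * γ * eF N p.1 q.2.2 + (3) * γ * eF N p.2.1 p.2.2 + (-2) * γ * eF N p.2.1 q.1 + (-1) * γ * eF N p.2.1 q.2.1 + (-2) * γ * eF N p.2.2 q.1 + (-1) * γ * eF N p.2.2 q.2.1) +
      (α lam₃) * ((-1) * chiF N x p.1 + (-1) * chiF N x p.2.1 + (1) * chiF N x q.1 + (1) * chiF N x q.2.1 + (-1) * γ * eF N p.1 p.2.2 + (-1) * γ * eF N p.1 q.1 + (-1) * γ * eF N p.1 q.2.1 + (-2) * γ * eF N p.1 q.2.2 + (-3) * γ * eF N p.2.1 p.2.2 + (1) * γ * eF N p.2.1 q.1 + (1) * γ * eF N p.2.1 q.2.1 + (1) * γ * eF N p.2.2 q.1 + (1) * γ * eF N p.2.2 q.2.1) +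
      (β) * ((-2) * chiF N x p.2.1 + (-4) * chiF N x p.2.2 + (4) * chiF N x q.1 + (2) * chiF N x q.2.1 + (2) * γ * eF N p.1 p.2.2 + (-2) * γ * eF N p.1 q.1 + (-2) * γ * eF N p.1 q.2.2 + (-2) * γ * eF N p.2.1 p.2.2 + (2) * γ * eF N p.2.1 q.2.1 + (2) * γ * eF N p.2.2 q.2.1)

lemma scaled_triple' {I : Type*} [Fintype I] [DecidableEq I]
    (A1 A2 A3 : Matrix I I ℂ) (F1 F2 F3 F4 F5 F6 : I → ℂ) (Ee : I → I → ℂ)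
    (h : ∀ p r t q, A1 p r ≠ 0 → A2 r t ≠ 0 → A3 t q ≠ 0 →
      F1 p * (F2 r * F3 r) * (F4 t * F5 t) * F6 q = Ee p q) :
    (Matrix.diagonal F1 * A1 * Matrix.diagonal F2) *
      (Matrix.diagonal F3 * A2 * Matrix.diagonal F4) *
      (Matrix.diagonal F5 * A3 * Matrix.diagonal F6) =
    Matrix.of fun p q => Ee p q * (A1 * A2 * A3) p q := by
  ext p q
  rw [Matrix.of_apply]
  rw [Matrix.mul_apply
    (M := Matrix.diagonal F1 * A1 * Matrix.diagonal F2 * (Matrix.diagonal F3 * A2 * Matrix.diagonal F4))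
    (N := Matrix.diagonal F5 * A3 * Matrix.diagonal F6)]
  rw [Matrix.mul_apply (M := A1 * A2) (N := A3)]
  rw [Finset.mul_sum]
  refine Finset.sum_congr rfl fun t _ => ?_
  rw [Matrix.mul_apply (M := Matrix.diagonal F1 * A1 * Matrix.diagonal F2)
    (N := Matrix.diagonal F3 * A2 * Matrix.diagonal F4)]
  rw [Matrix.mul_apply (M := A1) (N := A2)]
  rw [Finset.sum_mul, Finset.sum_mul, Finset.mul_sum]
  refine Finset.sum_congr rfl fun r _ => ?_
  rw [Matrix.mul_diagonal, Matrix.diagonal_mul, Matrix.mul_diagonal, Matrix.diagonal_mul,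
    Matrix.mul_diagonal, Matrix.diagonal_mul]
  by_cases h1 : A1 p r = 0
  · simp [h1]
  by_cases h2 : A2 r t = 0
  · simp [h2]
  by_cases h3 : A3 t q = 0
  · simp [h3]
  have hh := h p r t q h1 h2 h3
  linear_combination (A1 p r * A2 r t * A3 t q) * hh
set_option maxHeartbeats 2000000 in
lemma gnf_side_L (hN : 2 ≤ N) (γ : ℂ) (Λ : Set ℂ)
    (R : ℂ → ℂ → (Fin N → ℂ) → Matrix (Fin N × Fin N) (Fin N × Fin N) ℂ)
    (ha : ∀ lam ∈ Λ, ∀ mu ∈ Λ, ∀ x : Fin N → ℂ, ∀ d : Fin N → ℂ,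
      (Matrix.diagonal d ⊗ₖ (1 : Matrix (Fin N) (Fin N) ℂ) +
        (1 : Matrix (Fin N) (Fin N) ℂ) ⊗ₖ Matrix.diagonal d) * R lam mu x =
      R lam mu x * (Matrix.diagonal d ⊗ₖ (1 : Matrix (Fin N) (Fin N) ℂ) +
        (1 : Matrix (Fin N) (Fin N) ℂ) ⊗ₖ Matrix.diagonal d))
    (α : ℂ → ℂ) (β : ℂ)
    {lam₁ lam₂ lam₃ : ℂ} (h1 : lam₁ ∈ Λ) (h2 : lam₂ ∈ Λ) (h3 : lam₃ ∈ Λ) (x : Fin N → ℂ) :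
    sh12 N (RGauge N γ α β R lam₁ lam₂) x γ * sh13 N (RGauge N γ α β R lam₁ lam₃) x (-γ) *
      sh23 N (RGauge N γ α β R lam₂ lam₃) x γ =
    Matrix.of fun p q => Complex.exp (Eexp N γ α β lam₁ lam₂ lam₃ x p q) *
      (sh12 N (R lam₁ lam₂) x γ * sh13 N (R lam₁ lam₃) x (-γ) *
        sh23 N (R lam₂ lam₃) x γ) p q := by
  rw [sh12_gauge N hN, sh13_gauge N hN, sh23_gauge N hN]
  refine scaled_triple' _ _ _ _ _ _ _ _ _ _ ?_
  rintro ⟨a1, a2, a3⟩ ⟨b1, b2, b3⟩ ⟨t1, t2, t3⟩ ⟨c1, c2, c3⟩ hA1 hA2 hA3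
  simp only [sh12, sh13, sh23] at hA1 hA2 hA3
  by_cases e1 : a3 = b3
  swap
  · rw [if_neg e1] at hA1; exact absurd rfl hA1
  rw [if_pos e1] at hA1
  by_cases e2 : b2 = t2
  swap
  · rw [if_neg e2] at hA2; exact absurd rfl hA2
  rw [if_pos e2] at hA2
  by_cases e3 : t1 = c1
  swap
  · rw [if_neg e3] at hA3; exact absurd rfl hA3
  rw [if_pos e3] at hA3
  subst e1 e2 e3
  have hc1 := conserve N Λ R ha h1 h2 _ (a1, a2) (b1, b2) hA1
  have hc2 := conserve N Λ R ha h1 h3 _ (b1, a3) (t1, t3) hA2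
  have hc3 := conserve N Λ R ha h2 h3 _ (b2, t3) (c2, c3) hA3
  clear hA1 hA2 hA3
  rcases hc1 with ⟨u1, u2⟩ | ⟨u1, u2⟩ <;> rcases hc2 with ⟨v1, v2⟩ | ⟨v1, v2⟩ <;>
    rcases hc3 with ⟨w1, w2⟩ | ⟨w1, w2⟩ <;>
    simp only at u1 u2 v1 v2 w1 w2 <;>
    subst u1 <;> subst u2 <;> subst v1 <;> subst v2 <;> subst w1 <;> subst w2 <;>
    dsimp only <;>
    simp only [← Complex.exp_add] <;>
    (congr 1) <;>
    simp only [Eexp] <;>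
    (try simp only [eF_self, eF_comm]) <;>
    ring
set_option maxHeartbeats 2000000 in
lemma gnf_side_R (hN : 2 ≤ N) (γ : ℂ) (Λ : Set ℂ)
    (R : ℂ → ℂ → (Fin N → ℂ) → Matrix (Fin N × Fin N) (Fin N × Fin N) ℂ)
    (ha : ∀ lam ∈ Λ, ∀ mu ∈ Λ, ∀ x : Fin N → ℂ, ∀ d : Fin N → ℂ,
      (Matrix.diagonal d ⊗ₖ (1 : Matrix (Fin N) (Fin N) ℂ) +
        (1 : Matrix (Fin N) (Fin N) ℂ) ⊗ₖ Matrix.diagonal d) * R lam mu x =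
      R lam mu x * (Matrix.diagonal d ⊗ₖ (1 : Matrix (Fin N) (Fin N) ℂ) +
        (1 : Matrix (Fin N) (Fin N) ℂ) ⊗ₖ Matrix.diagonal d))
    (α : ℂ → ℂ) (β : ℂ)
    {lam₁ lam₂ lam₃ : ℂ} (h1 : lam₁ ∈ Λ) (h2 : lam₂ ∈ Λ) (h3 : lam₃ ∈ Λ) (x : Fin N → ℂ) :
    sh23 N (RGauge N γ α β R lam₂ lam₃) x (-γ) * sh13 N (RGauge N γ α β R lam₁ lam₃) x γ *
      sh12 N (RGauge N γ α β R lam₁ lam₂) x (-γ) =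
    Matrix.of fun p q => Complex.exp (Eexp N γ α β lam₁ lam₂ lam₃ x p q) *
      (sh23 N (R lam₂ lam₃) x (-γ) * sh13 N (R lam₁ lam₃) x γ *
        sh12 N (R lam₁ lam₂) x (-γ)) p q := by
  rw [sh12_gauge N hN, sh13_gauge N hN, sh23_gauge N hN]
  refine scaled_triple' _ _ _ _ _ _ _ _ _ _ ?_
  rintro ⟨a1, a2, a3⟩ ⟨r1, r2, r3⟩ ⟨t1, t2, t3⟩ ⟨c1, c2, c3⟩ hA1 hA2 hA3
  simp only [sh12, sh13, sh23] at hA1 hA2 hA3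
  by_cases e1 : a1 = r1
  swap
  · rw [if_neg e1] at hA1; exact absurd rfl hA1
  rw [if_pos e1] at hA1
  by_cases e2 : r2 = t2
  swap
  · rw [if_neg e2] at hA2; exact absurd rfl hA2
  rw [if_pos e2] at hA2
  by_cases e3 : t3 = c3
  swap
  · rw [if_neg e3] at hA3; exact absurd rfl hA3
  rw [if_pos e3] at hA3
  subst e1 e2 e3
  have hc1 := conserve N Λ R ha h2 h3 _ (a2, a3) (r2, r3) hA1
  have hc2 := conserve N Λ R ha h1 h3 _ (a1, r3) (t1, t3) hA2
  have hc3 := conserve N Λ R ha h1 h2 _ (t1, r2) (c1, c2) hA3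
  clear hA1 hA2 hA3
  rcases hc1 with ⟨u1, u2⟩ | ⟨u1, u2⟩ <;> rcases hc2 with ⟨v1, v2⟩ | ⟨v1, v2⟩ <;>
    rcases hc3 with ⟨w1, w2⟩ | ⟨w1, w2⟩ <;>
    simp only at u1 u2 v1 v2 w1 w2 <;>
    subst u1 <;> subst u2 <;> subst v1 <;> subst v2 <;> subst w1 <;> subst w2 <;>
    dsimp only <;>
    simp only [← Complex.exp_add] <;>
    (congr 1) <;>
    simp only [Eexp] <;>
    (try simp only [eF_self, eF_comm]) <;>
    ring
theorem gauge_freedom_GNF (hN : 2 ≤ N) (γ : ℂ) (Λ : Set ℂ)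
    (R : ℂ → ℂ → (Fin N → ℂ) → Matrix (Fin N × Fin N) (Fin N × Fin N) ℂ)
    (ha : ∀ lam ∈ Λ, ∀ mu ∈ Λ, ∀ x : Fin N → ℂ, ∀ d : Fin N → ℂ,
      (Matrix.diagonal d ⊗ₖ (1 : Matrix (Fin N) (Fin N) ℂ) +
        (1 : Matrix (Fin N) (Fin N) ℂ) ⊗ₖ Matrix.diagonal d) * R lam mu x =
      R lam mu x * (Matrix.diagonal d ⊗ₖ (1 : Matrix (Fin N) (Fin N) ℂ) +
        (1 : Matrix (Fin N) (Fin N) ℂ) ⊗ₖ Matrix.diagonal d))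
    (hb : ∀ lam₁ ∈ Λ, ∀ lam₂ ∈ Λ, ∀ lam₃ ∈ Λ, ∀ x : Fin N → ℂ,
      GNF N γ R lam₁ lam₂ lam₃ x)
    (α : ℂ → ℂ) (β : ℂ) :
    ∀ lam₁ ∈ Λ, ∀ lam₂ ∈ Λ, ∀ lam₃ ∈ Λ, ∀ x : Fin N → ℂ,
      GNF N γ (RGauge N γ α β R) lam₁ lam₂ lam₃ x := by
  intro lam₁ h1 lam₂ h2 lam₃ h3 x
  have hb' := hb lam₁ h1 lam₂ h2 lam₃ h3 x
  rw [GNF] at hb' ⊢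
  rw [gnf_side_L N hN γ Λ R ha α β h1 h2 h3 x,
    gnf_side_R N hN γ Λ R ha α β h1 h2 h3 x, hb']
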